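/- Let (L, R, E) be a bipartite graph and m a natural number such that every finite subset S ⊆ L with |S| ≥ m satisfies |E(S)| ≥ m. Let X ⊆ L be a finite set with |X| ≤ 2m, let D ⊆ X, and let μ : D → R be an injective function such that μ(x) ∈ E({x}) for every x ∈ D and such that every x ∈ X \ D has all of its neighbors used, i.e. E({x}) ⊆ μ(D). Then |X \ D| ≤ m. -/

import Mathlib

/-- The set of neighbors of a set `S` of left vertices in the bipartite graph
with edge relation `E`. -/
def nbhd {α β : Type*} (E : Set (α × β)) (S : Set α) : Set β :=
  {y | ∃ x ∈ S, (x, y) ∈ E}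

/-- failure counting for the greedy matching: suppose every finite
`S ⊆ L` with `|S| ≥ m` has `|E(S)| ≥ m`.  Let `X ⊆ L` be finite with `|X| ≤ 2m`,
`D ⊆ X`, and `μ` injective on `D` with `μ x` a neighbor of `x` for `x ∈ D`, such
that every `x ∈ X \ D` has all its neighbors in `μ(D)`.  Then `|X \ D| ≤ m`. -/
theorem stmt_8 {α β : Type} (m : ℕ) (L : Set α) (E : Set (α × β))
    (hdisp : ∀ S ⊆ L, S.Finite → m ≤ S.ncard → m ≤ (nbhd E S).ncard)
    (X : Set α) (hXL : X ⊆ L) (hXfin : X.Finite) (hXcard : X.ncard ≤ 2 * m)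
    (D : Set α) (hD : D ⊆ X) (μ : α → β)
    (hinj : Set.InjOn μ D)
    (hmatch : ∀ x ∈ D, (x, μ x) ∈ E)
    (hfail : ∀ x ∈ X \ D, nbhd E {x} ⊆ μ '' D) :
    (X \ D).ncard ≤ m := by
  by_contra h
  push_neg at h
  have hSfin : (X \ D).Finite := hXfin.diff
  have hsub : nbhd E (X \ D) ⊆ μ '' D := by
    rintro y ⟨x, hx, hxy⟩
    exact hfail x hx ⟨x, rfl, hxy⟩
  have h1 : m ≤ (nbhd E (X \ D)).ncard :=
    hdisp _ ((Set.diff_subset).trans hXL) hSfin (le_of_lt h)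
  have hDfin : D.Finite := hXfin.subset hD
  have h2 : (nbhd E (X \ D)).ncard ≤ (μ '' D).ncard :=
    Set.ncard_le_ncard hsub (hDfin.image μ)
  have h3 : (μ '' D).ncard = D.ncard := Set.ncard_image_of_injOn hinj
  have h4 : (X \ D).ncard + D.ncard = X.ncard :=
    Set.ncard_diff_add_ncard_of_subset hD hXfin
  omega
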